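/- (Monotonicity of perimeter for convex bodies.) If A ⊆ B are nonempty compact convex subsets of ℝ², then μH¹(frontier A) ≤ μH¹(frontier B): the perimeter of a convex body contained in another convex body is at most the perimeter of the containing body. -/

import Mathlib

open MeasureTheory Metric Set Filter
open scoped RealInnerProductSpace ENNReal NNReal Topology

noncomputable section PerimAux

local notation "E2" => EuclideanSpace ℝ (Fin 2)

/-- `y` is the nearest point of `K` to `x`, characterized variationally. -/
def IsNearestPt (K : Set (EuclideanSpace ℝ (Fin 2))) (x y : EuclideanSpace ℝ (Fin 2)) : Prop :=
  y ∈ K ∧ ∀ z ∈ K, ⟪x - y, z - y⟫ ≤ 0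

lemma exists_isNearestPt {K : Set E2} (hne : K.Nonempty) (hcl : IsClosed K)
    (hconv : Convex ℝ K) (x : E2) : ∃ y, IsNearestPt K x y := by
  obtain ⟨v, hvK, hv⟩ := exists_norm_eq_iInf_of_complete_convex hne hcl.isComplete hconv x
  exact ⟨v, hvK, (norm_eq_iInf_iff_real_inner_le_zero hconv hvK).1 hv⟩

lemma isNearestPt_dist {K : Set E2} {x x' y y' : E2}
    (h : IsNearestPt K x y) (h' : IsNearestPt K x' y') : dist y y' ≤ dist x x' := by
  have h1 : ⟪x - y, y' - y⟫ ≤ 0 := h.2 y' h'.1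
  have h2 : ⟪x' - y', y - y'⟫ ≤ 0 := h'.2 y h.1
  have h2' : (0:ℝ) ≤ ⟪x' - y', y' - y⟫ := by
    rw [show y' - y = -(y - y') by abel, inner_neg_right]; linarith
  have hsum : ⟪(x - y) - (x' - y'), y' - y⟫ ≤ 0 := by
    rw [inner_sub_left]; linarith
  have hrw : (x - y) - (x' - y') = (x - x') + (y' - y) := by abel
  rw [hrw, inner_add_left] at hsum
  have hn : ⟪y' - y, y' - y⟫ = ‖y' - y‖ ^ 2 := real_inner_self_eq_norm_sq _
  have hc : ⟪x - x', y - y'⟫ ≤ ‖x - x'‖ * ‖y - y'‖ := real_inner_le_norm _ _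
  have hneg : ⟪x - x', y' - y⟫ = - ⟪x - x', y - y'⟫ := by
    rw [show y' - y = -(y - y') by abel, inner_neg_right]
  have hns : ‖y' - y‖ = ‖y - y'‖ := norm_sub_rev _ _
  have key : ‖y - y'‖ ^ 2 ≤ ‖x - x'‖ * ‖y - y'‖ := by
    rw [hns] at hn; linarith
  rcases eq_or_lt_of_le (norm_nonneg (y - y')) with h0 | h0
  · simp [dist_eq_norm, ← h0]
  · have hmul : ‖y - y'‖ * ‖y - y'‖ ≤ ‖x - x'‖ * ‖y - y'‖ := by nlinarith
    have := le_of_mul_le_mul_right hmul h0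
    simpa [dist_eq_norm] using this

lemma isNearestPt_unique {K : Set E2} {x y y' : E2}
    (h : IsNearestPt K x y) (h' : IsNearestPt K x y') : y = y' := by
  have h0 : dist y y' ≤ 0 := by simpa using isNearestPt_dist h h'
  exact dist_le_zero.1 h0


lemma exists_supporting_vec {K : Set E2} (hne : K.Nonempty) (hcl : IsClosed K)
    (hconv : Convex ℝ K) {x : E2} (hx : x ∈ frontier K) :
    ∃ v : E2, ‖v‖ = 1 ∧ ∀ z ∈ K, ⟪z - x, v⟫ ≤ 0 := by
  have hxc : x ∈ closure Kᶜ := by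
    rw [frontier_eq_closure_inter_closure] at hx; exact hx.2
  obtain ⟨y, hy, hyx⟩ := mem_closure_iff_seq_limit.1 hxc
  have hv : ∀ n : ℕ, ∃ v : E2, ‖v‖ = 1 ∧ ∀ z ∈ K, ⟪v, z⟫ ≤ ⟪v, y n⟫ := by
    intro n
    obtain ⟨f, u, hfa, hfx⟩ := geometric_hahn_banach_closed_point hconv hcl (hy n)
    obtain ⟨z₀, hz₀⟩ := hne
    have hf0 : f ≠ 0 := by
      intro h
      rw [h] at hfa hfx
      have := hfa z₀ hz₀
      simp at this hfx
      linarith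
    set w := (InnerProductSpace.toDual ℝ E2).symm f with hw
    have hwf : ∀ z : E2, ⟪w, z⟫ = f z := fun z => InnerProductSpace.toDual_symm_apply
    have hw0 : w ≠ 0 := by
      intro h
      apply hf0
      ext z
      rw [← hwf z, h]
      simp
    have hwn : (0:ℝ) < ‖w‖ := norm_pos_iff.2 hw0
    refine ⟨‖w‖⁻¹ • w, ?_, ?_⟩
    · rw [norm_smul, norm_inv, norm_norm, inv_mul_cancel₀ hwn.ne']
    · intro z hz
      rw [real_inner_smul_left, real_inner_smul_left, hwf, hwf]
      have : f z ≤ f (y n) := le_of_lt (lt_trans (hfa z hz) hfx)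
      have hinv : (0:ℝ) ≤ ‖w‖⁻¹ := by positivity
      exact mul_le_mul_of_nonneg_left this hinv
  choose v hv1 hv2 using hv
  have hsph : ∀ n, v n ∈ sphere (0:E2) 1 := fun n => by
    simpa [mem_sphere_iff_norm] using hv1 n
  obtain ⟨w, hwsph, φ, hφ, htend⟩ := (isCompact_sphere (0:E2) 1).tendsto_subseq hsph
  refine ⟨w, by simpa [mem_sphere_iff_norm] using hwsph, ?_⟩
  intro z hz
  have h1 : Tendsto (fun n => ⟪v (φ n), z⟫) atTop (𝓝 ⟪w, z⟫) :=
    htend.inner tendsto_const_nhds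
  have h2 : Tendsto (fun n => ⟪v (φ n), y (φ n)⟫) atTop (𝓝 ⟪w, x⟫) :=
    htend.inner (hyx.comp hφ.tendsto_atTop)
  have hle : ⟪w, z⟫ ≤ ⟪w, x⟫ :=
    le_of_tendsto_of_tendsto' h1 h2 fun n => hv2 (φ n) z hz
  have : ⟪z - x, w⟫ = ⟪w, z⟫ - ⟪w, x⟫ := by
    rw [real_inner_comm, inner_sub_right]
  linarith [this ▸ sub_nonpos.2 hle]

lemma ray_hits_frontier {C : Set E2} (hC : IsCompact C) {x v : E2} (hx : x ∈ C)
    (hv : ‖v‖ = 1) : ∃ t : ℝ, 0 ≤ t ∧ x + t • v ∈ frontier C := by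
  obtain ⟨R, hR⟩ := hC.isBounded.subset_closedBall 0
  set S := {t : ℝ | 0 ≤ t ∧ x + t • v ∈ C} with hSdef
  have hS0 : (0:ℝ) ∈ S := ⟨le_refl 0, by simpa using hx⟩
  have hSsub : S ⊆ Set.Icc 0 (R + ‖x‖) := by
    rintro t ⟨ht0, htC⟩
    refine ⟨ht0, ?_⟩
    have h1 : ‖x + t • v‖ ≤ R := by simpa [dist_eq_norm] using hR htC
    have h2 : ‖t • v‖ = t := by
      rw [norm_smul, hv, mul_one, Real.norm_eq_abs, abs_of_nonneg ht0]
    have h3 : ‖t • v‖ ≤ ‖x + t • v‖ + ‖x‖ := by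
      have := norm_sub_le (x + t • v) x
      simpa using this
    linarith
  have hScl : IsClosed S := by
    have : S = Set.Ici (0:ℝ) ∩ (fun t : ℝ => x + t • v) ⁻¹' C := rfl
    rw [this]
    exact isClosed_Ici.inter (hC.isClosed.preimage (by continuity))
  have hScpt : IsCompact S := isCompact_Icc.of_isClosed_subset hScl hSsub
  have hTS : sSup S ∈ S := hScpt.sSup_mem ⟨0, hS0⟩
  set T := sSup S
  refine ⟨T, hTS.1, ?_⟩
  rw [frontier_eq_closure_inter_closure]
  refine ⟨subset_closure hTS.2, ?_⟩
  have htends : Tendsto (fun n : ℕ => x + (T + 1/(n+1)) • v) atTop (𝓝 (x + T • v)) := by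
    have h0 : Tendsto (fun n : ℕ => T + 1/(n+1)) atTop (𝓝 T) := by
      simpa using tendsto_const_nhds.add (tendsto_one_div_add_atTop_nhds_zero_nat :
        Tendsto (fun n : ℕ => 1 / ((n : ℝ) + 1)) atTop (𝓝 0))
    have : Tendsto (fun s : ℝ => x + s • v) (𝓝 T) (𝓝 (x + T • v)) := by
      apply Continuous.tendsto
      continuity
    exact this.comp h0
  refine mem_closure_of_tendsto htends (Filter.Eventually.of_forall fun n => ?_)
  intro hmem
  have hpos : (0:ℝ) < 1/(n+1) := by positivity
  have : T + 1/(n+1) ∈ S := ⟨by linarith [hTS.1], hmem⟩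
  have := le_csSup hScpt.bddAbove this
  linarith


lemma hausdorff_frontier_mono {A C : Set E2} (hAne : A.Nonempty) (hAcpt : IsCompact A)
    (hAconv : Convex ℝ A) (hC : IsCompact C) (hAC : A ⊆ C) :
    μH[1] (frontier A) ≤ μH[1] (frontier C) := by
  have hAcl := hAcpt.isClosed
  choose f hf using exists_isNearestPt hAne hAcl hAconv
  have hlip : LipschitzWith 1 f := LipschitzWith.of_dist_le_mul fun a b => by
    simpa using isNearestPt_dist (hf a) (hf b)
  have hsub : frontier A ⊆ f '' frontier C := by
    intro x hx
    obtain ⟨v, hv1, hv2⟩ := exists_supporting_vec hAne hAcl hAconv hx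
    have hxA : x ∈ A := hAcl.frontier_subset hx
    obtain ⟨t, ht0, htf⟩ := ray_hits_frontier hC (hAC hxA) hv1
    refine ⟨x + t • v, htf, ?_⟩
    have hnear : IsNearestPt A (x + t • v) x := by
      refine ⟨hxA, fun z hz => ?_⟩
      have h1 : x + t • v - x = t • v := by abel
      rw [h1, real_inner_smul_left]
      have h2 : ⟪v, z - x⟫ ≤ 0 := by rw [real_inner_comm]; exact hv2 z hz
      exact mul_nonpos_iff.2 (Or.inl ⟨ht0, h2⟩)
    exact isNearestPt_unique (hf (x + t • v)) hnear
  calc μH[1] (frontier A) ≤ μH[1] (f '' frontier C) := measure_mono hsub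
    _ ≤ (1:ℝ≥0) ^ (1:ℝ) * μH[1] (frontier C) :=
        hlip.hausdorffMeasure_image_le (by norm_num) _
    _ = μH[1] (frontier C) := by simp

/-- The point of the plane with given coordinates. -/
def mk2 (a b : ℝ) : EuclideanSpace ℝ (Fin 2) :=
  (EuclideanSpace.equiv (Fin 2) ℝ).symm ![a, b]

@[simp] lemma mk2_apply_zero (a b : ℝ) : mk2 a b 0 = a := rfl
@[simp] lemma mk2_apply_one (a b : ℝ) : mk2 a b 1 = b := rfl

lemma mk2_eq {p : E2} {a b : ℝ} (h0 : p 0 = a) (h1 : p 1 = b) : mk2 a b = p := by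
  apply (EuclideanSpace.equiv (Fin 2) ℝ).symm.apply_eq_iff_eq_symm_apply.2
  funext i
  fin_cases i
  · simpa using h0.symm
  · simpa using h1.symm

lemma dist_mk2 (a b a' b' : ℝ) :
    dist (mk2 a b) (mk2 a' b') = Real.sqrt (dist a a' ^ 2 + dist b b' ^ 2) := by
  rw [EuclideanSpace.dist_eq, Fin.sum_univ_two]
  rfl

lemma lipschitz_mk2_left (b : ℝ) : LipschitzWith 1 (fun t : ℝ => mk2 t b) := by
  apply LipschitzWith.of_dist_le_mul
  intro s t
  rw [dist_mk2]
  simp [Real.sqrt_sq_eq_abs, abs_of_nonneg dist_nonneg]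

lemma lipschitz_mk2_right (a : ℝ) : LipschitzWith 1 (fun t : ℝ => mk2 a t) := by
  apply LipschitzWith.of_dist_le_mul
  intro s t
  rw [dist_mk2]
  simp [Real.sqrt_sq_eq_abs, abs_of_nonneg dist_nonneg]

lemma lipschitz_image_finite {g : ℝ → E2} (hg : LipschitzWith 1 g) (R : ℝ) :
    μH[1] (g '' Set.Icc (-R) R) < ⊤ := by
  calc μH[1] (g '' Set.Icc (-R) R) ≤ (1:ℝ≥0) ^ (1:ℝ) * μH[1] (Set.Icc (-R) R) :=
      hg.hausdorffMeasure_image_le (by norm_num) _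
    _ = μH[1] (Set.Icc (-R) R) := by simp
    _ = volume (Set.Icc (-R) R) := by rw [MeasureTheory.hausdorffMeasure_real]
    _ < ⊤ := by rw [Real.volume_Icc]; exact ENNReal.ofReal_lt_top

/-- The square `[-R, R]²`. -/
def sq2 (R : ℝ) : Set (EuclideanSpace ℝ (Fin 2)) := {p | ∀ i, |p i| ≤ R}

lemma sq2_eq (R : ℝ) : sq2 R = ⋂ i, EuclideanSpace.proj (𝕜 := ℝ) i ⁻¹' Set.Icc (-R) R := by
  ext p
  simp [sq2, abs_le]

lemma sq2_convex (R : ℝ) : Convex ℝ (sq2 R) := by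
  rw [sq2_eq]
  exact convex_iInter fun i =>
    (convex_Icc _ _).linear_preimage (EuclideanSpace.proj (𝕜 := ℝ) i : E2 →ₗ[ℝ] ℝ)

lemma sq2_closed (R : ℝ) : IsClosed (sq2 R) := by
  rw [sq2_eq]
  exact isClosed_iInter fun i =>
    isClosed_Icc.preimage (EuclideanSpace.proj (𝕜 := ℝ) i).continuous

lemma abs_coord_le_norm (p : E2) (i : Fin 2) : |p i| ≤ ‖p‖ := by
  rw [EuclideanSpace.norm_eq, ← Real.sqrt_sq_eq_abs]
  apply Real.sqrt_le_sqrt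
  have := Finset.single_le_sum (f := fun j => ‖p j‖ ^ 2)
    (fun j _ => by positivity) (Finset.mem_univ i)
  simpa [Real.norm_eq_abs, sq_abs] using this

lemma sq2_compact {R : ℝ} (hR : 0 ≤ R) : IsCompact (sq2 R) := by
  refine (isCompact_closedBall (0:E2) (2*R)).of_isClosed_subset (sq2_closed R) ?_
  intro p hp
  have h0 : |p 0| ≤ R := hp 0
  have h1 : |p 1| ≤ R := hp 1
  have hn : ‖p‖ ≤ 2*R := by
    rw [EuclideanSpace.norm_eq, Fin.sum_univ_two]
    have : ‖p 0‖ ^ 2 + ‖p 1‖ ^ 2 ≤ (2*R)^2 := by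
      rw [Real.norm_eq_abs, Real.norm_eq_abs]
      nlinarith [abs_nonneg (p 0), abs_nonneg (p 1)]
    calc Real.sqrt (‖p 0‖ ^ 2 + ‖p 1‖ ^ 2) ≤ Real.sqrt ((2*R)^2) := Real.sqrt_le_sqrt this
      _ = 2*R := Real.sqrt_sq (by linarith)
  simpa [mem_closedBall, dist_eq_norm] using hn

lemma frontier_sq2_subset {R : ℝ} (hR : 0 ≤ R) : frontier (sq2 R) ⊆
    (fun t => mk2 t R) '' Set.Icc (-R) R ∪ (fun t => mk2 t (-R)) '' Set.Icc (-R) R ∪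
    ((fun t => mk2 R t) '' Set.Icc (-R) R ∪ (fun t => mk2 (-R) t) '' Set.Icc (-R) R) := by
  intro p hp
  have hpQ : p ∈ sq2 R := (sq2_closed R).frontier_subset hp
  have hpi : ¬ ∀ i, |p i| < R := by
    intro hlt
    have hopen : IsOpen {q : E2 | ∀ i, |q i| < R} := by
      have : {q : E2 | ∀ i, |q i| < R}
          = ⋂ i, EuclideanSpace.proj (𝕜 := ℝ) i ⁻¹' Set.Ioo (-R) R := by
        ext q; simp [abs_lt]
      rw [this]
      exact isOpen_iInter_of_finite fun i =>
        isOpen_Ioo.preimage (EuclideanSpace.proj (𝕜 := ℝ) i).continuous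
    have hsub : {q : E2 | ∀ i, |q i| < R} ⊆ sq2 R := fun q hq i => (hq i).le
    exact hp.2 (interior_maximal hsub hopen hlt)
  push_neg at hpi
  obtain ⟨i, hi⟩ := hpi
  have hieq : |p i| = R := le_antisymm (hpQ i) hi
  have hcases : p i = R ∨ p i = -R := abs_eq hR |>.1 hieq
  have hmem0 : p 0 ∈ Set.Icc (-R) R := abs_le.1 (hpQ 0)
  have hmem1 : p 1 ∈ Set.Icc (-R) R := abs_le.1 (hpQ 1)
  fin_cases i
  · rcases hcases with h | h
    · exact Or.inr (Or.inl ⟨p 1, hmem1, mk2_eq h rfl⟩)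
    · exact Or.inr (Or.inr ⟨p 1, hmem1, mk2_eq h rfl⟩)
  · rcases hcases with h | h
    · exact Or.inl (Or.inl ⟨p 0, hmem0, mk2_eq rfl h⟩)
    · exact Or.inl (Or.inr ⟨p 0, hmem0, mk2_eq rfl h⟩)

lemma frontier_sq2_finite {R : ℝ} (hR : 0 ≤ R) : μH[1] (frontier (sq2 R)) < ⊤ := by
  refine lt_of_le_of_lt (measure_mono (frontier_sq2_subset hR)) ?_
  refine lt_of_le_of_lt (measure_union_le _ _) (ENNReal.add_lt_top.2 ⟨?_, ?_⟩)
  · refine lt_of_le_of_lt (measure_union_le _ _) (ENNReal.add_lt_top.2 ⟨?_, ?_⟩)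
    · exact lipschitz_image_finite (lipschitz_mk2_left R) R
    · exact lipschitz_image_finite (lipschitz_mk2_left (-R)) R
  · refine lt_of_le_of_lt (measure_union_le _ _) (ENNReal.add_lt_top.2 ⟨?_, ?_⟩)
    · exact lipschitz_image_finite (lipschitz_mk2_right R) R
    · exact lipschitz_image_finite (lipschitz_mk2_right (-R)) R

end PerimAux

/-- The perimeter of a set in the Euclidean plane: the one-dimensional Hausdorff
measure of its topological frontier. -/
noncomputable def perim (s : Set (EuclideanSpace ℝ (Fin 2))) : ℝ :=
  (μH[1] (frontier s)).toReal

theorem perim_mono_of_convex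
    (A B : Set (EuclideanSpace ℝ (Fin 2)))
    (hAne : A.Nonempty) (hBne : B.Nonempty)
    (hAcpt : IsCompact A) (hBcpt : IsCompact B)
    (hAconv : Convex ℝ A) (hBconv : Convex ℝ B)
    (hAB : A ⊆ B) :
    perim A ≤ perim B := by
  obtain ⟨r, hr⟩ := hBcpt.isBounded.subset_closedBall 0
  set R := max r 0 with hRdef
  have hR : 0 ≤ R := le_max_right _ _
  have hBsq : B ⊆ sq2 R := by
    intro p hp i
    have h1 : ‖p‖ ≤ r := by simpa [Metric.mem_closedBall, dist_eq_norm] using hr hp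
    exact (abs_coord_le_norm p i).trans (h1.trans (le_max_left _ _))
  have h1 : μH[1] (frontier A) ≤ μH[1] (frontier B) :=
    hausdorff_frontier_mono hAne hAcpt hAconv hBcpt hAB
  have h2 : μH[1] (frontier B) ≤ μH[1] (frontier (sq2 R)) :=
    hausdorff_frontier_mono hBne hBcpt hBconv (sq2_compact hR) hBsq
  have hfin : μH[1] (frontier B) ≠ ⊤ := (h2.trans_lt (frontier_sq2_finite hR)).ne
  exact ENNReal.toReal_mono hfin h1
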